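/- The Verma module M(λ) over sl₂(ℂ) is simple if and only if λ ∉ ℤ_{≥0}. -/

import Mathlib

/-- The Verma module M(lam) over sl₂(ℂ) is simple iff lam ∉ ℤ≥0. -/
theorem stmt_13 (V : Type*) [AddCommGroup V] [Module ℂ V] (lam : ℂ)
    (b : Module.Basis ℕ ℂ V) (E H F : V →ₗ[ℂ] V)
    (hE0 : E (b 0) = 0)
    (hE : ∀ n : ℕ, 1 ≤ n → E (b n) = ((n : ℂ) * (lam - n + 1)) • b (n - 1))
    (hH : ∀ n : ℕ, H (b n) = (lam - 2 * n) • b n)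
    (hF : ∀ n : ℕ, F (b n) = b (n + 1)) :
    (∀ W : Submodule ℂ V,
        (∀ x ∈ W, E x ∈ W ∧ F x ∈ W ∧ H x ∈ W) → W = ⊥ ∨ W = ⊤) ↔
      ∀ N : ℕ, lam ≠ (N : ℂ) := by
  constructor
  · -- simple → lam not natural
    intro hsimp N hlam
    set s : Set ℕ := {n | N + 1 ≤ n} with hs
    set W : Submodule ℂ V := Submodule.span ℂ (b '' s) with hWdef
    have hgen : ∀ m ∈ s, b m ∈ W := fun m hm =>
      Submodule.subset_span ⟨m, hm, rfl⟩
    have hinv : ∀ x ∈ W, E x ∈ W ∧ F x ∈ W ∧ H x ∈ W := by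
      have key : ∀ (T : V →ₗ[ℂ] V), (∀ m ∈ s, T (b m) ∈ W) → ∀ x ∈ W, T x ∈ W := by
        intro T hT x hx
        have : T x ∈ Submodule.map T W := ⟨x, hx, rfl⟩
        rw [hWdef, Submodule.map_span] at this
        refine Submodule.span_le.2 ?_ this
        rintro _ ⟨_, ⟨m, hm, rfl⟩, rfl⟩
        exact hT m hm
      intro x hx
      refine ⟨key E ?_ x hx, key F ?_ x hx, key H ?_ x hx⟩
      · intro m hm
        have hm1 : 1 ≤ m := le_trans (Nat.le_add_left 1 N) hm
        rw [hE m hm1]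
        rcases eq_or_lt_of_le (show N + 1 ≤ m from hm) with h | h
        · have : lam - (m : ℂ) + 1 = 0 := by
            rw [hlam, ← h]; push_cast; ring
          rw [this]
          simp
        · exact Submodule.smul_mem _ _ (hgen (m - 1) (by simp [hs]; omega))
      · intro m hm
        rw [hF m]
        exact hgen (m + 1) (by simp [hs] at hm ⊢; omega)
      · intro m hm
        rw [hH m]
        exact Submodule.smul_mem _ _ (hgen m hm)
    rcases hsimp W hinv with h | h
    · have : b (N + 1) ∈ W := hgen (N + 1) (by simp [hs])
      rw [h, Submodule.mem_bot] at this
      exact b.ne_zero (N + 1) this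
    · have h0 : b 0 ∉ W :=
        b.linearIndependent.notMem_span_image (by simp [hs])
      rw [h] at h0
      exact h0 Submodule.mem_top
  · -- lam not natural → simple
    intro hne W hinv
    by_cases hbot : W = ⊥
    · exact Or.inl hbot
    right
    -- repr of H x
    have hreprH : ∀ (x : V) (n : ℕ), b.repr (H x) n = (lam - 2 * n) * b.repr x n := by
      intro x n
      have : ((Finsupp.lapply n).comp ((b.repr : V →ₗ[ℂ] (ℕ →₀ ℂ)).comp H)) =
          (lam - 2 * n) • ((Finsupp.lapply n).comp (b.repr : V →ₗ[ℂ] (ℕ →₀ ℂ))) := by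
        refine b.ext fun m => ?_
        simp only [LinearMap.comp_apply, LinearMap.smul_apply, Finsupp.lapply_apply,
          LinearMap.coe_coe, hH m, map_smul, Module.Basis.repr_self, Finsupp.smul_apply,
          smul_eq_mul, Finsupp.single_apply]
        by_cases hmn : m = n
        · subst hmn; simp
        · simp [hmn]
      have := LinearMap.congr_fun this x
      simpa using this
    -- there exists k with b k ∈ W
    have hstep : ∀ c : ℕ, ∀ x ∈ W, x ≠ 0 → (b.repr x).support.card ≤ c → ∃ k, b k ∈ W := by
      intro c
      induction c with
      | zero =>
        intro x hx hx0 hcard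
        exfalso
        apply hx0
        have : b.repr x = 0 := by
          ext n
          by_contra hn
          have : n ∈ (b.repr x).support := Finsupp.mem_support_iff.2 hn
          have := Finset.card_pos.2 ⟨n, this⟩
          omega
        simpa using congrArg b.repr.symm this
      | succ c ih =>
        intro x hx hx0 hcard
        have hsupp_ne : (b.repr x).support.Nonempty := by
          rw [Finsupp.support_nonempty_iff]
          simpa using (b.repr.map_ne_zero_iff.2 hx0)
        by_cases h1 : (b.repr x).support.card = 1
        · -- x is a multiple of a single basis vector
          obtain ⟨k, hk⟩ := Finset.card_eq_one.1 h1
          have hsingle := (Finsupp.support_eq_singleton.1 hk)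
          set c0 := b.repr x k with hc0
          have hck : c0 ≠ 0 := hsingle.1
          have hxe : x = c0 • b k := by
            have := congrArg b.repr.symm hsingle.2
            rw [b.repr.symm_apply_apply, Module.Basis.repr_symm_single] at this
            exact this
          refine ⟨k, ?_⟩
          have : b k = c0⁻¹ • x := by
            rw [hxe, smul_smul, inv_mul_cancel₀ hck, one_smul]
          rw [this]
          exact Submodule.smul_mem _ _ hx
        · -- at least two elements in support: reduce
          obtain ⟨l, hl⟩ := hsupp_ne
          have h2 : ∃ k ∈ (b.repr x).support, k ≠ l := by
            by_contra hc
            push_neg at hc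
            apply h1
            have : (b.repr x).support = {l} := by
              apply Finset.eq_singleton_iff_unique_mem.2 ⟨hl, hc⟩
            rw [this]; simp
          obtain ⟨k, hk, hkl⟩ := h2
          set y : V := H x - (lam - 2 * l) • x with hy
          have hyW : y ∈ W := Submodule.sub_mem _ (hinv x hx).2.2 (Submodule.smul_mem _ _ hx)
          have hrepry : ∀ n, b.repr y n = (2 * (l : ℂ) - 2 * n) * b.repr x n := by
            intro n
            rw [hy]
            simp only [map_sub, map_smul, Finsupp.sub_apply, Finsupp.smul_apply, smul_eq_mul,
              hreprH]
            ring
          have hy0 : y ≠ 0 := by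
            intro h0
            have := hrepry k
            rw [h0] at this
            simp only [map_zero, Finsupp.coe_zero, Pi.zero_apply] at this
            have hck : b.repr x k ≠ 0 := Finsupp.mem_support_iff.1 hk
            have hfac : (2 * (l : ℂ) - 2 * k) ≠ 0 := by
              intro hf
              apply hkl
              have : (l : ℂ) = k := by linear_combination hf / 2
              exact_mod_cast this.symm
            exact hfac (by
              rcases mul_eq_zero.1 this.symm with h | h
              · exact h
              · exact absurd h hck)
          have hsub : (b.repr y).support ⊆ (b.repr x).support.erase l := by
            intro n hn
            have hn' : b.repr y n ≠ 0 := Finsupp.mem_support_iff.1 hn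
            rw [hrepry n] at hn'
            have hxn : b.repr x n ≠ 0 := fun h => hn' (by rw [h, mul_zero])
            have hnl : n ≠ l := by
              intro h; subst h
              exact hn' (by ring_nf)
            exact Finset.mem_erase.2 ⟨hnl, Finsupp.mem_support_iff.2 hxn⟩
          have hcard' : (b.repr y).support.card ≤ c := by
            have h1' := Finset.card_le_card hsub
            have h2' := Finset.card_erase_of_mem hl
            omega
          exact ih y hyW hy0 hcard'
    obtain ⟨x, hxW, hx0⟩ : ∃ x ∈ W, x ≠ 0 := by
      rcases Submodule.ne_bot_iff W |>.1 hbot with ⟨x, hx, hx0⟩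
      exact ⟨x, hx, hx0⟩
    obtain ⟨k, hbk⟩ := hstep (b.repr x).support.card x hxW hx0 le_rfl
    -- descend from b k to b 0 using E
    have hdown : ∀ k, b k ∈ W → b 0 ∈ W := by
      intro k
      induction k with
      | zero => exact id
      | succ k ihk =>
        intro hk
        have hEk := hE (k + 1) (by omega)
        have hk1 : ((k : ℕ) + 1 : ℕ) - 1 = k := by omega
        rw [hk1] at hEk
        have hc : ((k + 1 : ℕ) : ℂ) * (lam - ((k + 1 : ℕ) : ℂ) + 1) ≠ 0 := by
          apply mul_ne_zero
          · exact_mod_cast Nat.succ_ne_zero k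
          · intro h
            apply hne k
            push_cast at h
            linear_combination h
        have : b k = (((k + 1 : ℕ) : ℂ) * (lam - ((k + 1 : ℕ) : ℂ) + 1))⁻¹ • E (b (k + 1)) := by
          rw [hEk, smul_smul, inv_mul_cancel₀ hc, one_smul]
        apply ihk
        rw [this]
        exact Submodule.smul_mem _ _ (hinv _ hk).1
    have hb0 : b 0 ∈ W := hdown k hbk
    -- climb with F
    have hall : ∀ n, b n ∈ W := by
      intro n
      induction n with
      | zero => exact hb0
      | succ n ihn =>
        have := (hinv _ ihn).2.1
        rwa [hF n] at this
    rw [eq_top_iff, ← b.span_eq]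
    refine Submodule.span_le.2 ?_
    rintro _ ⟨n, rfl⟩
    exact hall n
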